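/- Consider the Rankine–Hugoniot conditions for a stationary planar shock in the x₁ direction of the 2-D isentropic MHD β-model with pressure p(ρ) = aρ^γ: for states (ρ⁺,u₁⁺,u₂⁺,h₁⁺,h₂⁺) and (ρ⁻,u₁⁻,u₂⁻,h₁⁻,h₂⁻), (1) ρ⁺u₁⁺ = ρ⁻u₁⁻; (2) ρ⁺(u₁⁺)² + ((h₂⁺)² − (h₁⁺)²)/2 + a(ρ⁺)^γ = ρ⁻(u₁⁻)² + ((h₂⁻)² − (h₁⁻)²)/2 + a(ρ⁻)^γ; (3) ρ⁺u₁⁺u₂⁺ − h₁⁺h₂⁺ = ρ⁻u₁⁻u₂⁻ − h₁⁻h₂⁻; (4) β h₁⁺ = β h₁⁻; (5) h₂⁺u₁⁺ − h₁⁺u₂⁺ = h₂⁻u₁⁻ − h₁⁻u₂⁻. Assume β ≠ 0, a > 0, γ ≥ 1, ρ⁺ > 0, ρ⁻ > 0, u₁⁺ ≠ 0, the parallel conditions u₂⁺ = 0 and h₂⁺ = 0, and the nondegeneracy condition (h₁⁺)² ≠ ρ⁻(u₁⁻)². Then h₁⁺ = h₁⁻, u₂⁻ = 0, and h₂⁻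 = 0; moreover, setting R := ρ⁺/ρ⁻, one has R = u₁⁻/u₁⁺, and if in addition R ≠ 1, then the downstream Mach number M defined by M² := (u₁⁺)²/(a γ (ρ⁺)^{γ−1}) satisfies M² = (R^γ − 1)/(γ R^γ (R − 1)). -/

import Mathlib

/-- Lemma 3.1(i): parametrization of parallel MHD planar shocks with zero speed.  Under the
Rankine–Hugoniot conditions of the 2-D isentropic MHD β-model with `p(ρ) = aρ^γ`, assuming
`β ≠ 0`, `a > 0`, `γ ≥ 1`, positive densities, `u₁⁺ ≠ 0`, the parallel conditions
`u₂⁺ = 0`, `h₂⁺ = 0`, and the nondegeneracy `(h₁⁺)² ≠ ρ⁻(u₁⁻)²`, one has `h₁⁺ = h₁⁻`,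
`u₂⁻ = 0`, `h₂⁻ = 0`, `R := ρ⁺/ρ⁻ = u₁⁻/u₁⁺`, and (if `R ≠ 1`) the downstream Mach number
satisfies `M² = (R^γ − 1)/(γ R^γ (R − 1))`. -/
theorem parallel_MHD_shock_parametrization
    (a γ β : ℝ)
    (ρp up1 up2 hp1 hp2 : ℝ)  -- state on the + side
    (ρm um1 um2 hm1 hm2 : ℝ)  -- state on the − side
    (hβ : β ≠ 0) (ha : 0 < a) (hγ : 1 ≤ γ)
    (hρp : 0 < ρp) (hρm : 0 < ρm) (hup1 : up1 ≠ 0)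
    (hpar_u : up2 = 0) (hpar_h : hp2 = 0)
    (hnondeg : hp1 ^ 2 ≠ ρm * um1 ^ 2)
    -- Rankine–Hugoniot conditions for a stationary planar shock in the x₁ direction:
    (RH1 : ρp * up1 = ρm * um1)
    (RH2 : ρp * up1 ^ 2 + (hp2 ^ 2 - hp1 ^ 2) / 2 + a * ρp ^ γ
            = ρm * um1 ^ 2 + (hm2 ^ 2 - hm1 ^ 2) / 2 + a * ρm ^ γ)
    (RH3 : ρp * up1 * up2 - hp1 * hp2 = ρm * um1 * um2 - hm1 * hm2)
    (RH4 : β * hp1 = β * hm1)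
    (RH5 : hp2 * up1 - hp1 * up2 = hm2 * um1 - hm1 * um2) :
    hp1 = hm1 ∧ um2 = 0 ∧ hm2 = 0 ∧
    ρp / ρm = um1 / up1 ∧
    (ρp / ρm ≠ 1 →
      up1 ^ 2 / (a * γ * ρp ^ (γ - 1))
        = ((ρp / ρm) ^ γ - 1) / (γ * (ρp / ρm) ^ γ * (ρp / ρm - 1))) := by
  have hh : hp1 = hm1 := mul_left_cancel₀ hβ RH4
  subst hpar_u hpar_h hh
  have hum1 : um1 ≠ 0 := by
    intro h
    apply hup1
    have := RH1
    rw [h, mul_zero] at this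
    exact (mul_eq_zero.mp this).resolve_left hρp.ne'
  -- solve the linear system for um2, hm2
  have e3 : ρm * um1 * um2 = hp1 * hm2 := by linarith [RH3]
  have e5 : hm2 * um1 = hp1 * um2 := by linarith [RH5]
  have hum2 : um2 = 0 := by
    have key : um2 * (ρm * um1 ^ 2 - hp1 ^ 2) = 0 := by
      linear_combination um1 * e3 + hp1 * e5
    rcases mul_eq_zero.mp key with h | h
    · exact h
    · exact absurd (by linarith : hp1 ^ 2 = ρm * um1 ^ 2) hnondeg
  have hhm2 : hm2 = 0 := by
    have := e5
    rw [hum2, mul_zero] at this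
    exact (mul_eq_zero.mp this).resolve_right hum1
  refine ⟨rfl, hum2, hhm2, ?_, ?_⟩
  · field_simp
    linarith [RH1]
  · intro hR
    have hne : ρp ≠ ρm := by
      intro h; apply hR; rw [h]; field_simp
    have hP : (0:ℝ) < ρp ^ γ := Real.rpow_pos_of_pos hρp γ
    have hQ : (0:ℝ) < ρm ^ γ := Real.rpow_pos_of_pos hρm γ
    have hRγ : (ρp / ρm) ^ γ = ρp ^ γ / ρm ^ γ := Real.div_rpow hρp.le hρm.le γ
    have hexp : ρp ^ (γ - 1) = ρp ^ γ / ρp := by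
      rw [Real.rpow_sub hρp, Real.rpow_one]
    have hγ0 : γ ≠ 0 := by positivity
    -- energy relation with hp2 = hm2 = 0, hm1 = hp1
    have energy : ρp * up1 ^ 2 + a * ρp ^ γ = ρm * um1 ^ 2 + a * ρm ^ γ := by
      rw [hhm2] at RH2; linarith [RH2]
    have hum1eq : um1 = ρp * up1 / ρm := by field_simp; linarith [RH1]
    have key : ρp * up1 ^ 2 * (ρm - ρp) = a * ρm * (ρm ^ γ - ρp ^ γ) := by
      rw [hum1eq] at energy
      field_simp at energy
      nlinarith [energy]
    rw [hRγ, hexp]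
    have hd1 : ρp ^ γ / ρm ^ γ - 1 ≠ 0 := by
      intro h
      apply hne
      have : ρp ^ γ = ρm ^ γ := by field_simp at h; linarith
      exact Real.rpow_left_injOn hγ0 (Set.mem_setOf.mpr hρp.le)
        (Set.mem_setOf.mpr hρm.le) this
    have hsub : ρm - ρp ≠ 0 := sub_ne_zero.mpr (Ne.symm hne)
    have hRm1 : ρp / ρm - 1 ≠ 0 := sub_ne_zero.mpr hR
    rw [div_eq_div_iff (by positivity)
      (mul_ne_zero (mul_ne_zero hγ0 (by positivity)) hRm1)]
    field_simp
    linear_combination (-1 : ℝ) * key
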